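/- The iterated integral ∫_{1/2}^1 ∫_{1-x}^x (12/(π² x(1+y))) dy dx equals 1 - (6 Li₂(1/4) + 12 log²2)/π², where Li₂ is the dilogarithm. -/

import Mathlib

open Real

/-- The dilogarithm Li₂(z) = ∑_{n≥1} zⁿ/n². -/
noncomputable def Li2 (z : ℝ) : ℝ := ∑' n : ℕ, z ^ (n + 1) / (n + 1) ^ 2

lemma summable_u : Summable (fun n : ℕ => (1:ℝ) / ((n:ℝ) + 1) ^ 2) := by
  have h := (summable_nat_add_iff 1).mpr (summable_one_div_nat_pow.mpr (le_refl 2))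
  refine h.congr fun n => ?_
  push_cast
  ring

lemma li2_summable {z : ℝ} (h : |z| ≤ 1) :
    Summable (fun n : ℕ => z ^ (n + 1) / ((n:ℝ) + 1) ^ 2) := by
  refine Summable.of_norm_bounded summable_u fun n => ?_
  have hpos : (0:ℝ) < ((n:ℝ) + 1) ^ 2 := by positivity
  rw [Real.norm_eq_abs, abs_div, abs_pow, abs_of_pos hpos]
  gcongr
  exact pow_le_one₀ (abs_nonneg z) h

lemma li2_sq {z : ℝ} (h : |z| ≤ 1) : Li2 z + Li2 (-z) = Li2 (z ^ 2) / 2 := by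
  have hz : |(-z)| ≤ 1 := by rwa [abs_neg]
  have hz2 : |z ^ 2| ≤ 1 := by
    rw [abs_pow]; exact pow_le_one₀ (abs_nonneg z) h
  have S1 := li2_summable h
  have S2 := li2_summable hz
  unfold Li2
  rw [← S1.tsum_add S2]
  set g : ℕ → ℝ := fun n => z ^ (n + 1) / ((n:ℝ) + 1) ^ 2 + (-z) ^ (n + 1) / ((n:ℝ) + 1) ^ 2
    with hg
  have hinj : Function.Injective (fun m : ℕ => 2 * m + 1) := fun a b hab => by
    have : 2 * a + 1 = 2 * b + 1 := hab
    omega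
  have hsupp : Function.support g ⊆ Set.range (fun m : ℕ => 2 * m + 1) := by
    intro n hn
    rcases Nat.even_or_odd n with he | ho
    · exfalso
      apply hn
      have hodd : Odd (n + 1) := Even.add_one he
      simp only [hg, Odd.neg_pow hodd]
      ring
    · obtain ⟨m, hm⟩ := ho
      exact ⟨m, by show 2 * m + 1 = n; omega⟩
  rw [← hinj.tsum_eq hsupp]
  have key : ∀ m : ℕ, g (2 * m + 1) = (z ^ 2) ^ (m + 1) / ((m:ℝ) + 1) ^ 2 / 2 := by
    intro m
    have he : Even (2 * m + 1 + 1) := ⟨m + 1, by ring⟩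
    have hp : z ^ (2 * m + 1 + 1) = (z ^ 2) ^ (m + 1) := by
      rw [← pow_mul]; ring_nf
    have hm : ((m:ℝ) + 1) ≠ 0 := by positivity
    simp only [hg, Even.neg_pow he, hp]
    push_cast
    field_simp
    ring
  rw [tsum_congr key, tsum_div_const]

lemma li2_one : Li2 1 = π ^ 2 / 6 := by
  have h := hasSum_zeta_two
  have h2 : HasSum (fun n : ℕ => (1:ℝ) / ((n:ℝ) + 1) ^ 2) (π ^ 2 / 6) := by
    have hzero : ∀ x ∉ Set.range Nat.succ, (1:ℝ) / (x:ℝ) ^ 2 = 0 := by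
      intro x hx
      have hx0 : x = 0 := by
        rcases x with _ | y
        · rfl
        · exact absurd ⟨y, rfl⟩ hx
      subst hx0
      norm_num
    have h4 := (Function.Injective.hasSum_iff Nat.succ_injective hzero).mpr h
    have he : ((fun n : ℕ => (1:ℝ) / (n:ℝ) ^ 2) ∘ Nat.succ) = fun n : ℕ => (1:ℝ) / ((n:ℝ) + 1) ^ 2 := by
      funext n
      simp only [Function.comp_apply, Nat.succ_eq_add_one]
      push_cast
      ring
    rw [he] at h4
    exact h4
  unfold Li2
  rw [← h2.tsum_eq]
  exact tsum_congr fun n => by rw [one_pow]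

lemma li2_neg_one : Li2 (-1) = -(π ^ 2 / 12) := by
  have h := li2_sq (z := 1) (by norm_num)
  rw [one_pow, li2_one] at h
  linarith

lemma li2_continuousOn : ContinuousOn Li2 (Set.Icc (-1:ℝ) 1) := by
  have : ContinuousOn (fun x : ℝ => ∑' n : ℕ, x ^ (n + 1) / ((n:ℝ) + 1) ^ 2)
      (Set.Icc (-1:ℝ) 1) := by
    refine continuousOn_tsum (fun i => (continuous_pow _).continuousOn.div_const _)
      summable_u fun n x hx => ?_
    have hx1 : |x| ≤ 1 := abs_le.mpr ⟨hx.1, hx.2⟩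
    have hpos : (0:ℝ) < ((n:ℝ) + 1) ^ 2 := by positivity
    rw [Real.norm_eq_abs, abs_div, abs_pow, abs_of_pos hpos]
    gcongr
    exact pow_le_one₀ (abs_nonneg x) hx1
  exact this

lemma hasDerivAt_li2 {z : ℝ} (h : |z| < 1) (hz : z ≠ 0) :
    HasDerivAt Li2 (-Real.log (1 - z) / z) z := by
  set r : ℝ := (|z| + 1) / 2 with hr
  have hr0 : 0 ≤ r := by positivity
  have hr1 : r < 1 := by rw [hr]; linarith
  have hzr : |z| < r := by rw [hr]; linarith
  have key : HasDerivAt (fun y : ℝ => ∑' n : ℕ, y ^ (n + 1) / ((n:ℝ) + 1) ^ 2)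
      (∑' n : ℕ, z ^ n / ((n:ℝ) + 1)) z := by
    have h0mem : (0:ℝ) ∈ Metric.ball (0:ℝ) r := by
      simp only [Metric.mem_ball, dist_self]
      positivity
    have hzmem : z ∈ Metric.ball (0:ℝ) r := by
      simpa [Real.dist_eq] using hzr
    have hg : ∀ (n : ℕ) (y : ℝ), y ∈ Metric.ball (0:ℝ) r →
        HasDerivAt (fun y : ℝ => y ^ (n + 1) / ((n:ℝ) + 1) ^ 2) (y ^ n / ((n:ℝ) + 1)) y := by
      intro n y _
      have hne : ((n:ℝ) + 1) ≠ 0 := by positivity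
      have hd := (hasDerivAt_pow (n + 1) y).div_const (((n:ℝ) + 1) ^ 2)
      refine hd.congr_deriv ?_
      push_cast
      field_simp
    have hg' : ∀ (n : ℕ) (y : ℝ), y ∈ Metric.ball (0:ℝ) r →
        ‖y ^ n / ((n:ℝ) + 1)‖ ≤ r ^ n := by
      intro n y hy
      have hy' : |y| < r := by simpa [Real.dist_eq] using hy
      have hpos : (0:ℝ) < (n:ℝ) + 1 := by positivity
      rw [Real.norm_eq_abs, abs_div, abs_pow, abs_of_pos hpos]
      calc |y| ^ n / ((n:ℝ) + 1) ≤ |y| ^ n / 1 := by gcongr; norm_num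
        _ = |y| ^ n := div_one _
        _ ≤ r ^ n := pow_le_pow_left₀ (abs_nonneg y) hy'.le n
    have hg0 : Summable (fun n : ℕ => (0:ℝ) ^ (n + 1) / ((n:ℝ) + 1) ^ 2) := by
      refine summable_zero.congr fun n => ?_
      simp [zero_pow (Nat.succ_ne_zero n)]
    exact hasDerivAt_tsum_of_isPreconnected (summable_geometric_of_lt_one hr0 hr1)
      Metric.isOpen_ball (convex_ball (0:ℝ) r).isPreconnected hg hg' h0mem hg0 hzmem
  have hs := hasSum_pow_div_log_of_abs_lt_one h
  have heq : (fun n : ℕ => z ^ (n + 1) / ((n:ℝ) + 1) / z) = fun n : ℕ => z ^ n / ((n:ℝ) + 1) := by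
    funext n
    have hne : ((n:ℝ) + 1) ≠ 0 := by positivity
    field_simp [pow_succ]
    ring
  have hs2 : HasSum (fun n : ℕ => z ^ n / ((n:ℝ) + 1)) (-Real.log (1 - z) / z) := by
    have := hs.div_const z
    rwa [heq] at this
  rw [← hs2.tsum_eq]
  exact key

noncomputable def Fa (x : ℝ) : ℝ := Li2 (x / 2) - Li2 (-x) - Real.log 2 * Real.log x

lemma Fa_deriv {x : ℝ} (hx : x ∈ Set.Ioo (1/2 : ℝ) 1) :
    HasDerivAt Fa ((Real.log (1 + x) - Real.log (2 - x)) / x) x := by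
  obtain ⟨hx1, hx2⟩ := hx
  have hx0 : (0:ℝ) < x := by linarith
  have h1 : HasDerivAt (fun y : ℝ => Li2 (y / 2)) (-Real.log (1 - x / 2) / (x / 2) * (1 / 2)) x := by
    have hin : HasDerivAt (fun y : ℝ => y / 2) (1 / 2) x := by
      simpa using (hasDerivAt_id x).div_const 2
    exact (hasDerivAt_li2 (by rw [abs_of_pos (by linarith)]; linarith)
      (by positivity)).comp x hin
  have h2 : HasDerivAt (fun y : ℝ => Li2 (-y)) (-Real.log (1 - -x) / (-x) * (-1)) x := by
    have hin : HasDerivAt (fun y : ℝ => -y) (-1) x := by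
      exact hasDerivAt_neg x
    exact (hasDerivAt_li2 (by rw [abs_of_neg (by linarith)]; linarith)
      (by intro hc; rw [neg_eq_zero] at hc; linarith)).comp x hin
  have h3 : HasDerivAt (fun y : ℝ => Real.log 2 * Real.log y) (Real.log 2 * (1 / x)) x := by
    simpa [one_div] using (Real.hasDerivAt_log (ne_of_gt hx0)).const_mul (Real.log 2)
  have hF := (h1.sub h2).sub h3
  have hlog : Real.log (2 - x) = Real.log 2 + Real.log (1 - x / 2) := by
    rw [← Real.log_mul (by norm_num) (by intro hc; nlinarith)]
    ring_nf
  have hval : -Real.log (1 - x / 2) / (x / 2) * (1 / 2) - -Real.log (1 - -x) / (-x) * (-1)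
      - Real.log 2 * (1 / x) = (Real.log (1 + x) - Real.log (2 - x)) / x := by
    rw [hlog]
    have h1x : (1:ℝ) - -x = 1 + x := by ring
    rw [h1x]
    field_simp
    ring
  rw [hval] at hF
  exact hF

lemma Fa_cont : ContinuousOn Fa (Set.Icc (1/2 : ℝ) 1) := by
  have hc1 : ContinuousOn (fun x : ℝ => Li2 (x / 2)) (Set.Icc (1/2 : ℝ) 1) := by
    refine li2_continuousOn.comp (continuous_id.div_const 2).continuousOn fun x hx => ?_
    obtain ⟨h1, h2⟩ := hx
    simp only [Set.mem_Icc, id_eq]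
    constructor <;> linarith
  have hc2 : ContinuousOn (fun x : ℝ => Li2 (-x)) (Set.Icc (1/2 : ℝ) 1) := by
    refine li2_continuousOn.comp continuous_neg.continuousOn fun x hx => ?_
    obtain ⟨h1, h2⟩ := hx
    simp only [Set.mem_Icc]
    constructor <;> linarith
  have hc3 : ContinuousOn (fun x : ℝ => Real.log 2 * Real.log x) (Set.Icc (1/2 : ℝ) 1) := by
    refine ContinuousOn.mul continuousOn_const ?_
    refine ContinuousOn.log continuousOn_id fun x hx => ?_
    obtain ⟨h1, _⟩ := hx
    intro hc; rw [hc] at h1; norm_num at h1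
  exact (hc1.sub hc2).sub hc3

lemma integrand_cont : ContinuousOn
    (fun x : ℝ => (Real.log (1 + x) - Real.log (2 - x)) / x) (Set.Icc (1/2 : ℝ) 1) := by
  refine ContinuousOn.div ?_ continuousOn_id fun x hx => ?_
  · refine ContinuousOn.sub ?_ ?_
    · refine ContinuousOn.log (by fun_prop) fun x hx => ?_
      obtain ⟨h1, _⟩ := hx; intro hc; nlinarith
    · refine ContinuousOn.log (by fun_prop) fun x hx => ?_
      obtain ⟨_, h2⟩ := hx; intro hc; nlinarith
  · obtain ⟨h1, _⟩ := hx; intro hc; rw [hc] at h1; norm_num at h1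

lemma main_integral :
    (∫ x in (1/2 : ℝ)..1, (Real.log (1 + x) - Real.log (2 - x)) / x)
      = π ^ 2 / 12 - Li2 (1/4) / 2 - (Real.log 2) ^ 2 := by
  have hle : (1/2 : ℝ) ≤ 1 := by norm_num
  have hint : IntervalIntegrable
      (fun x : ℝ => (Real.log (1 + x) - Real.log (2 - x)) / x) MeasureTheory.volume (1/2) 1 := by
    apply ContinuousOn.intervalIntegrable
    rw [Set.uIcc_of_le hle]
    exact integrand_cont
  rw [intervalIntegral.integral_eq_sub_of_hasDerivAt_of_le hle Fa_cont
    (fun x hx => Fa_deriv hx) hint]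
  have hsq := li2_sq (z := 1/2) (by rw [abs_of_pos]; norm_num; norm_num)
  have hq : ((1:ℝ)/2) ^ 2 = 1/4 := by norm_num
  rw [hq] at hsq
  unfold Fa
  rw [Real.log_one]
  have e1 : (1:ℝ)/2/2 = 1/4 := by norm_num
  have e2 : Real.log ((1:ℝ)/2) = -Real.log 2 := by
    rw [one_div, Real.log_inv]
  rw [e1, e2, li2_neg_one]
  have : Li2 (-(1/2)) = Li2 (1/4) / 2 - Li2 (1/2) := by linarith
  rw [this]
  ring

theorem stmt9 :
    ∫ x in (1/2 : ℝ)..1, ∫ y in (1 - x)..x, 12 / (π ^ 2 * x * (1 + y))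
      = 1 - (6 * Li2 (1/4) + 12 * (Real.log 2) ^ 2) / π ^ 2 := by
  have hπ : π ≠ 0 := Real.pi_ne_zero
  have hle : (1/2 : ℝ) ≤ 1 := by norm_num
  have hinner : Set.EqOn (fun x : ℝ => ∫ y in (1 - x)..x, 12 / (π ^ 2 * x * (1 + y)))
      (fun x : ℝ => 12 / π ^ 2 * ((Real.log (1 + x) - Real.log (2 - x)) / x))
      (Set.uIcc (1/2 : ℝ) 1) := by
    intro x hx
    rw [Set.uIcc_of_le hle] at hx
    obtain ⟨hx1, hx2⟩ := hx
    have hx0 : (0:ℝ) < x := by linarith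
    have hrw : ∀ y : ℝ, 12 / (π ^ 2 * x * (1 + y)) = (12 / (π ^ 2 * x)) * (1 / (1 + y)) := by
      intro y
      rw [mul_one_div, div_div]
    simp_rw [hrw]
    rw [intervalIntegral.integral_const_mul]
    have h2 : (∫ y in (1 - x)..x, 1 / (1 + y)) = Real.log (1 + x) - Real.log (2 - x) := by
      have hcomp := intervalIntegral.integral_comp_add_right (a := 1 - x) (b := x)
        (f := fun u : ℝ => 1 / u) 1
      have hfun : (fun y : ℝ => 1 / (1 + y)) = fun y : ℝ => 1 / (y + 1) := by
        funext y; rw [add_comm]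
      rw [hfun, hcomp]
      have e1 : (1:ℝ) - x + 1 = 2 - x := by ring
      rw [e1]
      rw [integral_one_div]
      · rw [Real.log_div (by intro hc; linarith) (by intro hc; linarith)]
        rw [add_comm x 1]
      · intro hc
        rcases Set.mem_uIcc.mp hc with ⟨ha, hb⟩ | ⟨ha, hb⟩ <;> linarith
    rw [h2]
    field_simp
  rw [intervalIntegral.integral_congr hinner, intervalIntegral.integral_const_mul,
    main_integral]
  field_simp
  ring
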